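/- Let m, c be positive integers, R > 0, ε₁, ε₂ ≥ 0. Let A, A' ∈ ℝ^{m×c} with ‖A' − A‖_∞ ≤ ε₁, let α, α' ∈ ℝ^{m×c} with ‖α' − α‖_∞ ≤ ε₂ and ‖α'‖_∞ ≤ R, let W ∈ ℝ^{c×c} with ‖W‖_∞ ≤ R and b ∈ ℝ^{1×c}, and suppose the matrix M with rows M_{j,*} = A_{j,*}·W + b satisfies ‖M‖_∞ ≤ R. Let M' be the matrix with rows M'_{j,*} = A'_{j,*}·W + b. Then the scaled projection outputs satisfy ‖M' ∘ α' − M ∘ α‖_∞ ≤ c·R²·ε₁ + R·ε₂. -/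
import Mathlib


open Matrix

/-- The maximum absolute value of the entries of a real matrix (the `ℓ∞` entrywise norm). -/
noncomputable def maxEntry {m n : ℕ} (A : Matrix (Fin m) (Fin n) ℝ) : ℝ :=
  ⨆ i, ⨆ j, |A i j|

/-- The MLP layer with weight `W : ℝ^{c×c}` and bias row vector `b : ℝ^{1×c}`:
row `j` of the output is `A_{j,*} · W + b`. -/
noncomputable def MLP {m c : ℕ} (A : Matrix (Fin m) (Fin c) ℝ)
    (W : Matrix (Fin c) (Fin c) ℝ) (b : Matrix (Fin 1) (Fin c) ℝ) :
    Matrix (Fin m) (Fin c) ℝ :=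
  Matrix.of fun j k => (A * W) j k + b 0 k

lemma abs_le_maxEntry {m n : ℕ} (A : Matrix (Fin m) (Fin n) ℝ) (i : Fin m) (j : Fin n) :
    |A i j| ≤ maxEntry A := by
  have h1 : |A i j| ≤ ⨆ k, |A i k| :=
    le_ciSup (f := fun k => |A i k|) (Set.Finite.bddAbove (Set.finite_range _)) j
  exact h1.trans (le_ciSup (f := fun i => ⨆ k, |A i k|)
    (Set.Finite.bddAbove (Set.finite_range _)) i)

lemma maxEntry_le {m n : ℕ} (hm : 0 < m) (hn : 0 < n)
    (A : Matrix (Fin m) (Fin n) ℝ) (B : ℝ) (h : ∀ i j, |A i j| ≤ B) :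
    maxEntry A ≤ B := by
  have : Nonempty (Fin m) := ⟨⟨0, hm⟩⟩
  have : Nonempty (Fin n) := ⟨⟨0, hn⟩⟩
  exact ciSup_le fun i => ciSup_le fun j => h i j

theorem scaled_projection_error_bound (m c : ℕ) (hm : 0 < m) (hc : 0 < c)
    (R ε₁ ε₂ : ℝ) (hR : 0 < R) (hε₁ : 0 ≤ ε₁) (hε₂ : 0 ≤ ε₂)
    (A A' α α' : Matrix (Fin m) (Fin c) ℝ)
    (W : Matrix (Fin c) (Fin c) ℝ) (b : Matrix (Fin 1) (Fin c) ℝ)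
    (hA : maxEntry (A' - A) ≤ ε₁) (hα : maxEntry (α' - α) ≤ ε₂)
    (hα' : maxEntry α' ≤ R) (hW : maxEntry W ≤ R)
    (hM : maxEntry (MLP A W b) ≤ R) :
    maxEntry ((MLP A' W b) ⊙ α' - (MLP A W b) ⊙ α) ≤ c * R ^ 2 * ε₁ + R * ε₂ := by
  apply maxEntry_le hm hc
  intro i j
  have hMdiff : |(MLP A' W b) i j - (MLP A W b) i j| ≤ c * R * ε₁ := by
    have : (MLP A' W b) i j - (MLP A W b) i j = ∑ k, (A' - A) i k * W k j := by
      simp [MLP, Matrix.mul_apply, Matrix.sub_apply, sub_mul, Finset.sum_sub_distrib]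
    rw [this]
    calc |∑ k, (A' - A) i k * W k j| ≤ ∑ k, |(A' - A) i k * W k j| :=
          Finset.abs_sum_le_sum_abs _ _
      _ ≤ ∑ _k : Fin c, ε₁ * R := by
          apply Finset.sum_le_sum
          intro k _
          rw [abs_mul]
          exact mul_le_mul ((abs_le_maxEntry _ i k).trans hA)
            ((abs_le_maxEntry _ k j).trans hW) (abs_nonneg _) hε₁
      _ = c * R * ε₁ := by simp; ring
  have key : ((MLP A' W b) ⊙ α' - (MLP A W b) ⊙ α) i j
      = ((MLP A' W b) i j - (MLP A W b) i j) * α' i j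
        + (MLP A W b) i j * ((α' - α) i j) := by
    simp [Matrix.sub_apply, Matrix.hadamard]
    ring
  rw [key]
  calc |((MLP A' W b) i j - (MLP A W b) i j) * α' i j
        + (MLP A W b) i j * ((α' - α) i j)|
      ≤ |((MLP A' W b) i j - (MLP A W b) i j) * α' i j|
        + |(MLP A W b) i j * ((α' - α) i j)| := abs_add_le _ _
    _ = |(MLP A' W b) i j - (MLP A W b) i j| * |α' i j|
        + |(MLP A W b) i j| * |(α' - α) i j| := by rw [abs_mul, abs_mul]
    _ ≤ (c * R * ε₁) * R + R * ε₂ := by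
        have h1 := mul_le_mul hMdiff ((abs_le_maxEntry α' i j).trans hα')
          (abs_nonneg _) (by positivity)
        have h2 := mul_le_mul ((abs_le_maxEntry _ i j).trans hM)
          ((abs_le_maxEntry _ i j).trans hα) (abs_nonneg _) hR.le
        exact add_le_add h1 h2
    _ = c * R ^ 2 * ε₁ + R * ε₂ := by ring
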